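/- Let f : ℝ² → ℝ be twice continuously differentiable on an open set containing Δ = [a,b] × [c,d] (a < b, c < d), with second-order mixed partial derivative f₁₂ = ∂²f/∂x∂y, and suppose |f₁₂| is convex on Δ (as a function of the pair of variables). Let A = (1/2)[(1/(b-a))∫_a^b (f(x,c)+f(x,d)) dx + (1/(d-c))∫_c^d (f(a,y)+f(b,y)) dy]. Then |(f(a,c)+f(a,d)+f(b,c)+f(b,d))/4 + (1/((b-a)(d-c)))∫_a^b ∫_c^d f(x,y) dy dx − A| ≤ ((b-a)(d-c)/16) · (|f₁₂(a,c)| + |f₁₂(a,d)| + |f₁₂(b,c)| + |f₁₂(b,d)|)/4. -/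

import Mathlib

open MeasureTheory intervalIntegral

private lemma integ_poly (m e p q : ℝ) :
    ∫ x in p..q, (m - x) * (e - x) =
      (m*e*q - (m+e)*q^2/2 + q^3/3) - (m*e*p - (m+e)*p^2/2 + p^3/3) := by
  apply intervalIntegral.integral_eq_sub_of_hasDerivAt
  · intro x _
    have h : HasDerivAt (fun x : ℝ => m*e*x - (m+e)*x^2/2 + x^3/3)
        (m*e*1 - (m+e)*(2*x^1)/2 + (3*x^2)/3) x := by
      exact (((hasDerivAt_id x).const_mul (m*e)).sub
        (((hasDerivAt_pow 2 x).const_mul (m+e)).div_const 2)).add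
        ((hasDerivAt_pow 3 x).div_const 3)
    exact h.congr_deriv (by ring)
  · apply Continuous.intervalIntegrable; fun_prop

private lemma abs_weight_left (a b : ℝ) (hab : a ≤ b) :
    ∫ x in a..b, |x - (a+b)/2| * (b - x) = (b-a)^3/8 := by
  set m := (a+b)/2 with hm
  have ham : a ≤ m := by rw [hm]; linarith
  have hmb : m ≤ b := by rw [hm]; linarith
  have h1 : ∫ x in a..m, |x - m| * (b - x) = ∫ x in a..m, (m - x) * (b - x) := by
    apply intervalIntegral.integral_congr
    intro x hx
    rw [Set.uIcc_of_le ham] at hx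
    show |x - m| * (b - x) = (m - x) * (b - x)
    rw [abs_of_nonpos (by linarith [hx.2])]
    ring
  have h2 : ∫ x in m..b, |x - m| * (b - x) = ∫ x in m..b, -((m - x) * (b - x)) := by
    apply intervalIntegral.integral_congr
    intro x hx
    rw [Set.uIcc_of_le hmb] at hx
    show |x - m| * (b - x) = -((m - x) * (b - x))
    rw [abs_of_nonneg (by linarith [hx.1])]
    ring
  have hint : ∀ p q : ℝ, IntervalIntegrable (fun x => |x - m| * (b - x)) volume p q := by
    intro p q; apply Continuous.intervalIntegrable; fun_prop
  have hsplit := intervalIntegral.integral_add_adjacent_intervals (hint a m) (hint m b)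
  rw [← hsplit, h1, h2, intervalIntegral.integral_neg, integ_poly, integ_poly, hm]
  ring

private lemma abs_weight_right (a b : ℝ) (hab : a ≤ b) :
    ∫ x in a..b, |x - (a+b)/2| * (x - a) = (b-a)^3/8 := by
  set m := (a+b)/2 with hm
  have ham : a ≤ m := by rw [hm]; linarith
  have hmb : m ≤ b := by rw [hm]; linarith
  have h1 : ∫ x in a..m, |x - m| * (x - a) = ∫ x in a..m, -((m - x) * (a - x)) := by
    apply intervalIntegral.integral_congr
    intro x hx
    rw [Set.uIcc_of_le ham] at hx
    show |x - m| * (x - a) = -((m - x) * (a - x))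
    rw [abs_of_nonpos (by linarith [hx.2])]
    ring
  have h2 : ∫ x in m..b, |x - m| * (x - a) = ∫ x in m..b, (m - x) * (a - x) := by
    apply intervalIntegral.integral_congr
    intro x hx
    rw [Set.uIcc_of_le hmb] at hx
    show |x - m| * (x - a) = (m - x) * (a - x)
    rw [abs_of_nonneg (by linarith [hx.1])]
    ring
  have hint : ∀ p q : ℝ, IntervalIntegrable (fun x => |x - m| * (x - a)) volume p q := by
    intro p q; apply Continuous.intervalIntegrable; fun_prop
  have hsplit := intervalIntegral.integral_add_adjacent_intervals (hint a m) (hint m b)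
  rw [← hsplit, h1, h2, intervalIntegral.integral_neg, integ_poly, integ_poly, hm]
  ring

private lemma weight_int (a b P Q m : ℝ) (hab : a < b) (hm : m = (a+b)/2) :
    ∫ x in a..b, |x - m| * (((b-x)/(b-a))*P + ((x-a)/(b-a))*Q)
      = (b-a)^2/8 * (P + Q) := by
  subst hm
  have hba : b - a ≠ 0 := by linarith
  have hcong : ∀ x : ℝ, |x - (a+b)/2| * (((b-x)/(b-a))*P + ((x-a)/(b-a))*Q)
      = (P/(b-a)) * (|x - (a+b)/2| * (b - x)) + (Q/(b-a)) * (|x - (a+b)/2| * (x - a)) := by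
    intro x; field_simp
  simp_rw [hcong]
  rw [intervalIntegral.integral_add, intervalIntegral.integral_const_mul,
    intervalIntegral.integral_const_mul, abs_weight_left a b hab.le,
    abs_weight_right a b hab.le]
  · field_simp
  · apply Continuous.intervalIntegrable; fun_prop
  · apply Continuous.intervalIntegrable; fun_prop

private lemma box_integrable {W : ℝ → ℝ → ℝ} {a b c d : ℝ}
    (hW : ContinuousOn (fun p : ℝ × ℝ => W p.1 p.2) (Set.Icc a b ×ˢ Set.Icc c d)) :
    Integrable (Function.uncurry W)
      ((volume.restrict (Set.Ioc a b)).prod (volume.restrict (Set.Ioc c d))) := by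
  rw [Measure.prod_restrict]
  have h1 : IntegrableOn (Function.uncurry W) (Set.Icc a b ×ˢ Set.Icc c d) (volume.prod volume) :=
    hW.integrableOn_compact (isCompact_Icc.prod isCompact_Icc)
  exact h1.mono_set (Set.prod_mono Set.Ioc_subset_Icc_self Set.Ioc_subset_Icc_self)

private lemma fubini_box {W : ℝ → ℝ → ℝ} {a b c d : ℝ} (hab : a ≤ b) (hcd : c ≤ d)
    (hW : ContinuousOn (fun p : ℝ × ℝ => W p.1 p.2) (Set.Icc a b ×ˢ Set.Icc c d)) :
    ∫ x in a..b, ∫ y in c..d, W x y = ∫ y in c..d, ∫ x in a..b, W x y := by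
  rw [intervalIntegral.integral_of_le hab, intervalIntegral.integral_of_le hcd]
  simp_rw [intervalIntegral.integral_of_le hcd, intervalIntegral.integral_of_le hab]
  exact MeasureTheory.integral_integral_swap (box_integrable hW)

private lemma inner_integrable {W : ℝ → ℝ → ℝ} {a b c d : ℝ} (hab : a ≤ b) (hcd : c ≤ d)
    (hW : ContinuousOn (fun p : ℝ × ℝ => W p.1 p.2) (Set.Icc a b ×ˢ Set.Icc c d)) :
    IntervalIntegrable (fun x => ∫ y in c..d, W x y) volume a b := by
  rw [intervalIntegrable_iff_integrableOn_Ioc_of_le hab]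
  simp_rw [intervalIntegral.integral_of_le hcd]
  exact (box_integrable hW).integral_prod_left

private lemma key_algebra (a b c d Cac Cad Cbc Cbd Xc Xd Ya Yb D : ℝ)
    (hba : b - a ≠ 0) (hdc : d - c ≠ 0) :
    (Cac + Cad + Cbc + Cbd) / 4
        + (1 / ((b - a) * (d - c)))
          * (D - (1 / 2) * ((1 / (b - a)) * (Xc + Xd)
              + (1 / (d - c)) * (Ya + Yb)) * ((b - a) * (d - c)))
      = (1 / ((b - a) * (d - c)))
          * ((b - (a+b)/2) * ((d - (c+d)/2) * Cbd - (c - (c+d)/2) * Cbc - Yb)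
            - (a - (a+b)/2) * ((d - (c+d)/2) * Cad - (c - (c+d)/2) * Cac - Ya)
            - ((d - (c+d)/2) * Xd - (c - (c+d)/2) * Xc - D)) := by
  field_simp
  ring

set_option maxHeartbeats 2000000 in
/-- Sarikaya et al.'s Hadamard-type inequality (Theorem 2) for functions whose
mixed second partial derivative has convex absolute value on the rectangle. -/
theorem sarikaya_theorem_two
    (a b c d : ℝ) (hab : a < b) (hcd : c < d)
    (f f₁₂ : ℝ → ℝ → ℝ) (U : Set (ℝ × ℝ)) (hU : IsOpen U)
    (hsub : Set.Icc a b ×ˢ Set.Icc c d ⊆ U)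
    (hf : ContDiffOn ℝ 2 (fun p : ℝ × ℝ => f p.1 p.2) U)
    (hf₁₂ : ∀ x y, f₁₂ x y = deriv (fun xx => deriv (fun yy => f xx yy) y) x)
    (hconv : ConvexOn ℝ (Set.Icc a b ×ˢ Set.Icc c d)
      (fun p : ℝ × ℝ => |f₁₂ p.1 p.2|)) :
    |(f a c + f a d + f b c + f b d) / 4
        + (1 / ((b - a) * (d - c))) * ∫ x in a..b, ∫ y in c..d, f x y
        - (1 / 2) * ((1 / (b - a)) * (∫ x in a..b, (f x c + f x d))
          + (1 / (d - c)) * (∫ y in c..d, (f a y + f b y)))|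
      ≤ ((b - a) * (d - c) / 16) *
          ((|f₁₂ a c| + |f₁₂ a d| + |f₁₂ b c| + |f₁₂ b d|) / 4) := by
  have hba : (0:ℝ) < b - a := by linarith
  have hdc : (0:ℝ) < d - c := by linarith
  set F : ℝ × ℝ → ℝ := fun p => f p.1 p.2 with hF
  set G : ℝ × ℝ → ℝ := fun p => fderiv ℝ F p (0, 1) with hG
  set H : ℝ × ℝ → ℝ := fun p => fderiv ℝ G p (1, 0) with hH
  have hmem : ∀ x ∈ Set.Icc a b, ∀ y ∈ Set.Icc c d, (x, y) ∈ U :=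
    fun x hx y hy => hsub (Set.mk_mem_prod hx hy)
  have hFd : ∀ p ∈ U, DifferentiableAt ℝ F p := fun p hp =>
    (hf.differentiableOn (by norm_num)).differentiableAt (hU.mem_nhds hp)
  have hG1 : ContDiffOn ℝ 1 G U := by
    have h1 : ContDiffOn ℝ 1 (fderiv ℝ F) U := hf.fderiv_of_isOpen hU (by norm_num)
    exact (ContinuousLinearMap.apply ℝ ℝ ((0:ℝ), (1:ℝ))).contDiff.comp_contDiffOn h1
  have hGd : ∀ p ∈ U, DifferentiableAt ℝ G p := fun p hp =>
    (hG1.differentiableOn one_ne_zero).differentiableAt (hU.mem_nhds hp)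
  have hGcont : ContinuousOn G U := hG1.continuousOn
  have hFcont : ContinuousOn F U := hf.continuousOn
  have hHcont : ContinuousOn H U := by
    have h1 : ContinuousOn (fderiv ℝ G) U := hG1.continuousOn_fderiv_of_isOpen hU le_rfl
    exact (ContinuousLinearMap.apply ℝ ℝ ((1:ℝ), (0:ℝ))).continuous.comp_continuousOn h1
  have hdy : ∀ p ∈ U, HasDerivAt (fun y => f p.1 y) (G p) p.2 := by
    intro p hp
    have h1 : HasDerivAt (fun y : ℝ => ((p.1, y) : ℝ × ℝ)) ((0 : ℝ), (1 : ℝ)) p.2 :=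
      (hasDerivAt_const _ _).prodMk (hasDerivAt_id _)
    have h2 := (hFd p hp).hasFDerivAt.comp_hasDerivAt p.2 h1
    exact h2
  have hdx : ∀ p ∈ U, HasDerivAt (fun x => G (x, p.2)) (H p) p.1 := by
    intro p hp
    have h1 : HasDerivAt (fun x : ℝ => ((x, p.2) : ℝ × ℝ)) ((1 : ℝ), (0 : ℝ)) p.1 :=
      (hasDerivAt_id _).prodMk (hasDerivAt_const _ _)
    have h2 := (hGd p hp).hasFDerivAt.comp_hasDerivAt p.1 h1
    exact h2
  have hf12 : ∀ p ∈ U, f₁₂ p.1 p.2 = H p := by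
    intro p hp
    rw [hf₁₂]
    have hev : (fun xx => deriv (fun yy => f xx yy) p.2) =ᶠ[nhds p.1]
        (fun xx => G (xx, p.2)) := by
      have hopen : ∀ᶠ xx in nhds p.1, (xx, p.2) ∈ U := by
        have hc : Continuous (fun xx : ℝ => ((xx, p.2) : ℝ × ℝ)) :=
          continuous_id.prodMk continuous_const
        have := hc.continuousAt (x := p.1) (hU.mem_nhds (by simpa using hp))
        exact this
      filter_upwards [hopen] with xx hxx
      exact (hdy (xx, p.2) hxx).deriv
    rw [hev.deriv_eq]
    exact (hdx p hp).deriv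
  -- midpoints
  set m₁ : ℝ := (a+b)/2 with hm₁
  set m₂ : ℝ := (c+d)/2 with hm₂
  -- continuity on slices
  have hsliceX : ∀ (W : ℝ × ℝ → ℝ), ContinuousOn W U → ∀ y ∈ Set.Icc c d,
      ContinuousOn (fun x => W (x, y)) (Set.Icc a b) := by
    intro W hW y hy
    exact hW.comp ((continuous_id.prodMk continuous_const).continuousOn)
      (fun x hx => hmem x hx y hy)
  have hsliceY : ∀ (W : ℝ × ℝ → ℝ), ContinuousOn W U → ∀ x ∈ Set.Icc a b,
      ContinuousOn (fun y => W (x, y)) (Set.Icc c d) := by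
    intro W hW x hx
    exact hW.comp ((continuous_const.prodMk continuous_id).continuousOn)
      (fun y hy => hmem x hx y hy)
  have hf12X : ∀ y ∈ Set.Icc c d, ContinuousOn (fun x => f₁₂ x y) (Set.Icc a b) := by
    intro y hy
    refine (hsliceX H hHcont y hy).congr ?_
    intro x hx
    exact hf12 (x, y) (hmem x hx y hy)
  have hf12Y : ∀ x ∈ Set.Icc a b, ContinuousOn (fun y => f₁₂ x y) (Set.Icc c d) := by
    intro x hx
    refine (hsliceY H hHcont x hx).congr ?_
    intro y hy
    exact hf12 (x, y) (hmem x hx y hy)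
  -- Step 1 : integration by parts in x, for fixed y
  have step1 : ∀ y ∈ Set.Icc c d,
      ∫ x in a..b, (x - m₁) * f₁₂ x y
        = (b - m₁) * G (b, y) - (a - m₁) * G (a, y) - ∫ x in a..b, G (x, y) := by
    intro y hy
    have h := intervalIntegral.integral_mul_deriv_eq_deriv_mul
      (u := fun x => x - m₁) (u' := fun _ => (1:ℝ)) (v := fun x => G (x, y))
      (v' := fun x => f₁₂ x y) (a := a) (b := b)
      (fun x _ => (hasDerivAt_id x).sub_const m₁)
      (fun x hx => by
        rw [Set.uIcc_of_le hab.le] at hx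
        have hp : (x, y) ∈ U := hmem x hx y hy
        have h12 : f₁₂ x y = H (x, y) := hf12 (x, y) hp
        show HasDerivAt (fun x => G (x, y)) (f₁₂ x y) x
        rw [h12]
        exact hdx (x, y) hp)
      intervalIntegrable_const
      (by
        apply ContinuousOn.intervalIntegrable
        rw [Set.uIcc_of_le hab.le]
        exact hf12X y hy)
    simp only [one_mul] at h
    rw [h]
  -- parts in y for fixed x
  have party : ∀ x ∈ Set.Icc a b,
      ∫ y in c..d, (y - m₂) * G (x, y)
        = (d - m₂) * f x d - (c - m₂) * f x c - ∫ y in c..d, f x y := by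
    intro x hx
    have h := intervalIntegral.integral_mul_deriv_eq_deriv_mul
      (u := fun y => y - m₂) (u' := fun _ => (1:ℝ)) (v := fun y => f x y)
      (v' := fun y => G (x, y)) (a := c) (b := d)
      (fun y _ => (hasDerivAt_id y).sub_const m₂)
      (fun y hy => by
        rw [Set.uIcc_of_le hcd.le] at hy
        exact hdy (x, y) (hmem x hx y hy))
      intervalIntegrable_const
      (by
        apply ContinuousOn.intervalIntegrable
        rw [Set.uIcc_of_le hcd.le]
        exact hsliceY G hGcont x hx)
    simp only [one_mul] at h
    rw [h]
  -- continuity of basic slices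
  have hfa : ContinuousOn (fun y => f a y) (Set.Icc c d) :=
    hsliceY F hFcont a (Set.left_mem_Icc.2 hab.le)
  have hfb : ContinuousOn (fun y => f b y) (Set.Icc c d) :=
    hsliceY F hFcont b (Set.right_mem_Icc.2 hab.le)
  have hfc : ContinuousOn (fun x => f x c) (Set.Icc a b) :=
    hsliceX F hFcont c (Set.left_mem_Icc.2 hcd.le)
  have hfd : ContinuousOn (fun x => f x d) (Set.Icc a b) :=
    hsliceX F hFcont d (Set.right_mem_Icc.2 hcd.le)
  have hGa : ContinuousOn (fun y => G (a, y)) (Set.Icc c d) :=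
    hsliceY G hGcont a (Set.left_mem_Icc.2 hab.le)
  have hGb : ContinuousOn (fun y => G (b, y)) (Set.Icc c d) :=
    hsliceY G hGcont b (Set.right_mem_Icc.2 hab.le)
  -- box continuity
  have hFbox : ContinuousOn (fun p : ℝ × ℝ => f p.1 p.2) (Set.Icc a b ×ˢ Set.Icc c d) :=
    hFcont.mono hsub
  have hWbox : ContinuousOn (fun p : ℝ × ℝ => (p.2 - m₂) * G (p.1, p.2))
      (Set.Icc a b ×ˢ Set.Icc c d) := by
    apply ContinuousOn.mul
    · fun_prop
    · exact (hGcont.mono hsub).congr (fun p _ => by rw [Prod.mk.eta])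
  have hWbox' : ContinuousOn (fun p : ℝ × ℝ => (p.1 - m₂) * G (p.2, p.1))
      (Set.Icc c d ×ˢ Set.Icc a b) := by
    apply ContinuousOn.mul
    · fun_prop
    · refine hGcont.comp (by fun_prop) ?_
      intro p hp
      exact hmem p.2 hp.2 p.1 hp.1
  -- integrability helpers
  have hinner_f : IntervalIntegrable (fun x => ∫ y in c..d, f x y) volume a b :=
    inner_integrable hab.le hcd.le hFbox
  have hinner_G : IntervalIntegrable (fun y => ∫ x in a..b, (y - m₂) * G (x, y)) volume c d := by
    have := inner_integrable (W := fun y x => (y - m₂) * G (x, y)) hcd.le hab.le hWbox'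
    exact this
  have hint_fc : IntervalIntegrable (fun x => f x c) volume a b := by
    apply ContinuousOn.intervalIntegrable; rw [Set.uIcc_of_le hab.le]; exact hfc
  have hint_fd : IntervalIntegrable (fun x => f x d) volume a b := by
    apply ContinuousOn.intervalIntegrable; rw [Set.uIcc_of_le hab.le]; exact hfd
  have hint_fa : IntervalIntegrable (fun y => f a y) volume c d := by
    apply ContinuousOn.intervalIntegrable; rw [Set.uIcc_of_le hcd.le]; exact hfa
  have hint_fb : IntervalIntegrable (fun y => f b y) volume c d := by
    apply ContinuousOn.intervalIntegrable; rw [Set.uIcc_of_le hcd.le]; exact hfb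
  have hint_yGa : IntervalIntegrable (fun y => (y - m₂) * G (a, y)) volume c d := by
    apply ContinuousOn.intervalIntegrable; rw [Set.uIcc_of_le hcd.le]
    exact (continuousOn_id.sub continuousOn_const).mul hGa
  have hint_yGb : IntervalIntegrable (fun y => (y - m₂) * G (b, y)) volume c d := by
    apply ContinuousOn.intervalIntegrable; rw [Set.uIcc_of_le hcd.le]
    exact (continuousOn_id.sub continuousOn_const).mul hGb
  have hint_Ga : IntervalIntegrable (fun y => G (a, y)) volume c d := by
    apply ContinuousOn.intervalIntegrable; rw [Set.uIcc_of_le hcd.le]; exact hGa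
  have hint_Gb : IntervalIntegrable (fun y => G (b, y)) volume c d := by
    apply ContinuousOn.intervalIntegrable; rw [Set.uIcc_of_le hcd.le]; exact hGb
  have hGswapbox : ContinuousOn (fun p : ℝ × ℝ => G (p.2, p.1))
      (Set.Icc c d ×ˢ Set.Icc a b) := by
    refine hGcont.comp (by fun_prop) ?_
    intro p hp
    exact hmem p.2 hp.2 p.1 hp.1
  -- Step 2: assemble the identity
  have fub : ∫ y in c..d, ∫ x in a..b, (y - m₂) * G (x, y)
      = ∫ x in a..b, ∫ y in c..d, (y - m₂) * G (x, y) :=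
    (fubini_box hab.le hcd.le (W := fun x y => (y - m₂) * G (x, y)) hWbox).symm
  have hT3 : ∫ y in c..d, ∫ x in a..b, (y - m₂) * G (x, y)
      = (d - m₂) * (∫ x in a..b, f x d) - (c - m₂) * (∫ x in a..b, f x c)
        - ∫ x in a..b, ∫ y in c..d, f x y := by
    rw [fub]
    have hcongr : ∫ x in a..b, ∫ y in c..d, (y - m₂) * G (x, y)
        = ∫ x in a..b, ((d - m₂) * f x d - (c - m₂) * f x c - ∫ y in c..d, f x y) := by
      apply intervalIntegral.integral_congr
      intro x hx
      rw [Set.uIcc_of_le hab.le] at hx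
      exact party x hx
    rw [hcongr,
      intervalIntegral.integral_sub ((hint_fd.const_mul _).sub (hint_fc.const_mul _)) hinner_f,
      intervalIntegral.integral_sub (hint_fd.const_mul _) (hint_fc.const_mul _),
      intervalIntegral.integral_const_mul, intervalIntegral.integral_const_mul]
  have hLHS2 : (∫ y in c..d, (y - m₂) * ∫ x in a..b, (x - m₁) * f₁₂ x y)
      = (b - m₁) * ((d - m₂) * f b d - (c - m₂) * f b c - ∫ y in c..d, f b y)
        - (a - m₁) * ((d - m₂) * f a d - (c - m₂) * f a c - ∫ y in c..d, f a y)
        - ((d - m₂) * (∫ x in a..b, f x d) - (c - m₂) * (∫ x in a..b, f x c)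
            - ∫ x in a..b, ∫ y in c..d, f x y) := by
    have hcongr : (∫ y in c..d, (y - m₂) * ∫ x in a..b, (x - m₁) * f₁₂ x y)
        = ∫ y in c..d, ((b - m₁) * ((y - m₂) * G (b, y)) - (a - m₁) * ((y - m₂) * G (a, y))
            - ∫ x in a..b, (y - m₂) * G (x, y)) := by
      apply intervalIntegral.integral_congr
      intro y hy
      rw [Set.uIcc_of_le hcd.le] at hy
      show (y - m₂) * (∫ x in a..b, (x - m₁) * f₁₂ x y)
          = (b - m₁) * ((y - m₂) * G (b, y)) - (a - m₁) * ((y - m₂) * G (a, y))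
            - ∫ x in a..b, (y - m₂) * G (x, y)
      rw [step1 y hy, intervalIntegral.integral_const_mul]
      ring
    rw [hcongr,
      intervalIntegral.integral_sub
        ((hint_yGb.const_mul _).sub (hint_yGa.const_mul _)) hinner_G,
      intervalIntegral.integral_sub (hint_yGb.const_mul _) (hint_yGa.const_mul _),
      intervalIntegral.integral_const_mul, intervalIntegral.integral_const_mul,
      hT3, party b (Set.right_mem_Icc.2 hab.le), party a (Set.left_mem_Icc.2 hab.le)]
  -- key identity
  have hsplitX : ∫ x in a..b, (f x c + f x d)
      = (∫ x in a..b, f x c) + ∫ x in a..b, f x d :=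
    intervalIntegral.integral_add hint_fc hint_fd
  have hsplitY : ∫ y in c..d, (f a y + f b y)
      = (∫ y in c..d, f a y) + ∫ y in c..d, f b y :=
    intervalIntegral.integral_add hint_fa hint_fb
  have keyeq : (f a c + f a d + f b c + f b d) / 4
        + (1 / ((b - a) * (d - c))) * ∫ x in a..b, ∫ y in c..d, f x y
        - (1 / 2) * ((1 / (b - a)) * (∫ x in a..b, (f x c + f x d))
          + (1 / (d - c)) * (∫ y in c..d, (f a y + f b y)))
      = (1 / ((b - a) * (d - c)))
          * ∫ y in c..d, (y - m₂) * ∫ x in a..b, (x - m₁) * f₁₂ x y := by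
    set Cst := (1 / 2) * ((1 / (b - a)) * (∫ x in a..b, (f x c + f x d))
      + (1 / (d - c)) * (∫ y in c..d, (f a y + f b y))) with hCst
    have h1 : ∀ x ∈ Set.uIcc a b,
        (∫ y in c..d, (f x y - Cst)) = (∫ y in c..d, f x y) - (d - c) * Cst := by
      intro x hx
      rw [Set.uIcc_of_le hab.le] at hx
      have hi : IntervalIntegrable (fun y => f x y) volume c d := by
        apply ContinuousOn.intervalIntegrable; rw [Set.uIcc_of_le hcd.le]
        exact hsliceY F hFcont x hx
      rw [intervalIntegral.integral_sub hi intervalIntegrable_const,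
        intervalIntegral.integral_const, smul_eq_mul]
    have h2 : (∫ x in a..b, ∫ y in c..d, (f x y - Cst))
        = ∫ x in a..b, ((∫ y in c..d, f x y) - (d - c) * Cst) :=
      intervalIntegral.integral_congr h1
    rw [h2, intervalIntegral.integral_sub hinner_f intervalIntegrable_const,
      intervalIntegral.integral_const, smul_eq_mul, mul_comm (d - c) Cst, ← mul_assoc,
      mul_comm (b - a) Cst, mul_assoc, hCst, hsplitX, hsplitY, hLHS2, hm₁, hm₂]
    exact key_algebra a b c d (f a c) (f a d) (f b c) (f b d)
      (∫ x in a..b, f x c) (∫ x in a..b, f x d)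
      (∫ y in c..d, f a y) (∫ y in c..d, f b y)
      (∫ x in a..b, ∫ y in c..d, f x y) hba.ne' hdc.ne'
  rw [keyeq, abs_mul, abs_of_pos (show (0:ℝ) < 1 / ((b - a) * (d - c)) by positivity)]
  -- convexity bounds
  have convx : ∀ x ∈ Set.Icc a b, ∀ y ∈ Set.Icc c d,
      |f₁₂ x y| ≤ ((b - x)/(b - a)) * |f₁₂ a y| + ((x - a)/(b - a)) * |f₁₂ b y| := by
    intro x hx y hy
    have ht : 0 ≤ (b - x)/(b - a) := div_nonneg (by linarith [hx.2]) hba.le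
    have hu : 0 ≤ (x - a)/(b - a) := div_nonneg (by linarith [hx.1]) hba.le
    have htu : (b - x)/(b - a) + (x - a)/(b - a) = 1 := by field_simp; ring
    have hcomb : ((b - x)/(b - a)) • ((a, y) : ℝ × ℝ)
        + ((x - a)/(b - a)) • ((b, y) : ℝ × ℝ) = ((x, y) : ℝ × ℝ) := by
      rw [Prod.ext_iff]
      constructor
      · show (b - x)/(b - a) * a + (x - a)/(b - a) * b = x
        field_simp; ring
      · show (b - x)/(b - a) * y + (x - a)/(b - a) * y = y
        field_simp
        ring
    have h2 := hconv.2 (Set.mk_mem_prod (Set.left_mem_Icc.2 hab.le) hy)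
      (Set.mk_mem_prod (Set.right_mem_Icc.2 hab.le) hy) ht hu htu
    rw [hcomb] at h2
    simpa [smul_eq_mul] using h2
  have convy : ∀ x ∈ Set.Icc a b, ∀ y ∈ Set.Icc c d,
      |f₁₂ x y| ≤ ((d - y)/(d - c)) * |f₁₂ x c| + ((y - c)/(d - c)) * |f₁₂ x d| := by
    intro x hx y hy
    have ht : 0 ≤ (d - y)/(d - c) := div_nonneg (by linarith [hy.2]) hdc.le
    have hu : 0 ≤ (y - c)/(d - c) := div_nonneg (by linarith [hy.1]) hdc.le
    have htu : (d - y)/(d - c) + (y - c)/(d - c) = 1 := by field_simp; ring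
    have hcomb : ((d - y)/(d - c)) • ((x, c) : ℝ × ℝ)
        + ((y - c)/(d - c)) • ((x, d) : ℝ × ℝ) = ((x, y) : ℝ × ℝ) := by
      rw [Prod.ext_iff]
      constructor
      · show (d - y)/(d - c) * x + (y - c)/(d - c) * x = x
        field_simp
        ring
      · show (d - y)/(d - c) * c + (y - c)/(d - c) * d = y
        field_simp; ring
    have h2 := hconv.2 (Set.mk_mem_prod hx (Set.left_mem_Icc.2 hcd.le))
      (Set.mk_mem_prod hx (Set.right_mem_Icc.2 hcd.le)) ht hu htu
    rw [hcomb] at h2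
    simpa [smul_eq_mul] using h2
  -- inner bound
  have hbnd_inner : ∀ y ∈ Set.Icc c d,
      |∫ x in a..b, (x - m₁) * f₁₂ x y| ≤ (b - a)^2/8 * (|f₁₂ a y| + |f₁₂ b y|) := by
    intro y hy
    have h1 : |∫ x in a..b, (x - m₁) * f₁₂ x y| ≤ ∫ x in a..b, |(x - m₁) * f₁₂ x y| :=
      intervalIntegral.abs_integral_le_integral_abs hab.le
    have h2 : (∫ x in a..b, |(x - m₁) * f₁₂ x y|)
        ≤ ∫ x in a..b, |x - m₁| * (((b - x)/(b - a)) * |f₁₂ a y|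
            + ((x - a)/(b - a)) * |f₁₂ b y|) := by
      apply intervalIntegral.integral_mono_on hab.le
      · apply ContinuousOn.intervalIntegrable; rw [Set.uIcc_of_le hab.le]
        exact ((continuousOn_id.sub continuousOn_const).mul (hf12X y hy)).abs
      · apply Continuous.intervalIntegrable; fun_prop
      · intro x hx
        rw [abs_mul]
        exact mul_le_mul_of_nonneg_left (convx x hx y hy) (abs_nonneg _)
    exact (h1.trans h2).trans_eq (weight_int a b _ _ m₁ hab hm₁)
  -- integrability of the inner integral as a function of y
  have hIyInt : IntervalIntegrable (fun y => ∫ x in a..b, (x - m₁) * f₁₂ x y) volume c d := by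
    have hbase : IntervalIntegrable (fun y => (b - m₁) * G (b, y) - (a - m₁) * G (a, y)
        - ∫ x in a..b, G (x, y)) volume c d := by
      refine IntervalIntegrable.sub (IntervalIntegrable.sub ?_ ?_) ?_
      · exact hint_Gb.const_mul _
      · exact hint_Ga.const_mul _
      · exact inner_integrable (W := fun y x => G (x, y)) hcd.le hab.le hGswapbox
    rw [intervalIntegrable_iff_integrableOn_Ioc_of_le hcd.le] at hbase ⊢
    apply hbase.congr_fun _ measurableSet_Ioc
    intro y hy
    exact (step1 y (Set.Ioc_subset_Icc_self hy)).symm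
  set P : ℝ := |f₁₂ a c| + |f₁₂ b c| with hP
  set Q : ℝ := |f₁₂ a d| + |f₁₂ b d| with hQ
  have hbnd1 : |∫ y in c..d, (y - m₂) * ∫ x in a..b, (x - m₁) * f₁₂ x y|
      ≤ ∫ y in c..d, |(y - m₂) * ∫ x in a..b, (x - m₁) * f₁₂ x y| :=
    intervalIntegral.abs_integral_le_integral_abs hcd.le
  have hbnd2 : (∫ y in c..d, |(y - m₂) * ∫ x in a..b, (x - m₁) * f₁₂ x y|)
      ≤ ∫ y in c..d, (b - a)^2/8 * (|y - m₂| * (((d - y)/(d - c)) * P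
          + ((y - c)/(d - c)) * Q)) := by
    apply intervalIntegral.integral_mono_on hcd.le
    · exact (hIyInt.continuousOn_mul (by fun_prop)).abs
    · apply Continuous.intervalIntegrable; fun_prop
    · intro y hy
      have e1 : |f₁₂ a y| + |f₁₂ b y| ≤ ((d - y)/(d - c)) * P + ((y - c)/(d - c)) * Q := by
        have ha := convy a (Set.left_mem_Icc.2 hab.le) y hy
        have hb := convy b (Set.right_mem_Icc.2 hab.le) y hy
        rw [hP, hQ]
        calc |f₁₂ a y| + |f₁₂ b y|
            ≤ (((d - y)/(d - c)) * |f₁₂ a c| + ((y - c)/(d - c)) * |f₁₂ a d|)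
              + (((d - y)/(d - c)) * |f₁₂ b c| + ((y - c)/(d - c)) * |f₁₂ b d|) :=
              add_le_add ha hb
          _ = ((d - y)/(d - c)) * (|f₁₂ a c| + |f₁₂ b c|)
              + ((y - c)/(d - c)) * (|f₁₂ a d| + |f₁₂ b d|) := by ring
      calc |(y - m₂) * ∫ x in a..b, (x - m₁) * f₁₂ x y|
          = |y - m₂| * |∫ x in a..b, (x - m₁) * f₁₂ x y| := abs_mul _ _
        _ ≤ |y - m₂| * ((b - a)^2/8 * (|f₁₂ a y| + |f₁₂ b y|)) :=
            mul_le_mul_of_nonneg_left (hbnd_inner y hy) (abs_nonneg _)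
        _ ≤ |y - m₂| * ((b - a)^2/8 * (((d - y)/(d - c)) * P + ((y - c)/(d - c)) * Q)) :=
            mul_le_mul_of_nonneg_left
              (mul_le_mul_of_nonneg_left e1 (by positivity)) (abs_nonneg _)
        _ = (b - a)^2/8 * (|y - m₂| * (((d - y)/(d - c)) * P + ((y - c)/(d - c)) * Q)) := by
            ring
  have hfinal : |∫ y in c..d, (y - m₂) * ∫ x in a..b, (x - m₁) * f₁₂ x y|
      ≤ (b - a)^2/8 * ((d - c)^2/8 * (P + Q)) := by
    refine (hbnd1.trans hbnd2).trans_eq ?_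
    rw [intervalIntegral.integral_const_mul, weight_int c d P Q m₂ hcd hm₂]
  calc (1 / ((b - a) * (d - c)))
        * |∫ y in c..d, (y - m₂) * ∫ x in a..b, (x - m₁) * f₁₂ x y|
      ≤ (1 / ((b - a) * (d - c))) * ((b - a)^2/8 * ((d - c)^2/8 * (P + Q))) :=
        mul_le_mul_of_nonneg_left hfinal (by positivity)
    _ = ((b - a) * (d - c) / 16) *
          ((|f₁₂ a c| + |f₁₂ a d| + |f₁₂ b c| + |f₁₂ b d|) / 4) := by
        rw [hP, hQ]; field_simp; ring
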